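/- The involution code ĉ : Ĩ_n → ℕⁿ \ ℙⁿ is injective. -/

import Mathlib

open scoped TensorProduct

/-- Membership in the affine symmetric group `S̃_n`, viewed inside `Equiv.Perm ℤ`. -/
def IsAffine (n : ℕ) (π : Equiv.Perm ℤ) : Prop :=
  (∀ i : ℤ, π (i + n) = π i + n) ∧
  (∑ i ∈ Finset.Icc (1 : ℤ) (n : ℤ), π i) = ∑ i ∈ Finset.Icc (1 : ℤ) (n : ℤ), i

/-- The underlying function of the affine reflection `t_{ij}`. -/
def affTFun (n : ℕ) (i j k : ℤ) : ℤ :=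
  if (k - i) % (n : ℤ) = 0 then k - i + j
  else if (k - j) % (n : ℤ) = 0 then k - j + i
  else k

theorem affTFun_involutive {n : ℕ} {i j : ℤ} (h : ¬ (j - i) % (n : ℤ) = 0) :
    Function.Involutive (affTFun n i j) := by
  have key : ∀ a : ℤ, a % (n : ℤ) = 0 ↔ (n : ℤ) ∣ a :=
    fun a => (@Int.dvd_iff_emod_eq_zero (n : ℤ) a).symm
  rw [key] at h
  intro k
  by_cases h1 : (n : ℤ) ∣ (k - i)
  · have h2 : ¬ (n : ℤ) ∣ (k - i + j - i) := by
      intro hd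
      apply h
      have h5 : j - i = (k - i + j - i) - (k - i) := by ring
      rw [h5]
      exact dvd_sub hd h1
    have h3 : (n : ℤ) ∣ (k - i + j - j) := by
      have h5 : k - i + j - j = k - i := by ring
      rw [h5]; exact h1
    have e1 : affTFun n i j k = k - i + j := by simp [affTFun, key, h1]
    have e2 : affTFun n i j (k - i + j) = k := by
      simp only [affTFun, key]
      rw [if_neg h2, if_pos h3]
      ring
    rw [e1, e2]
  · by_cases h2 : (n : ℤ) ∣ (k - j)
    · have h3 : (n : ℤ) ∣ (k - j + i - i) := by
        have h5 : k - j + i - i = k - j := by ring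
        rw [h5]; exact h2
      have e1 : affTFun n i j k = k - j + i := by simp [affTFun, key, h1, h2]
      have e2 : affTFun n i j (k - j + i) = k := by
        simp only [affTFun, key]
        rw [if_pos h3]
        ring
      rw [e1, e2]
    · have e1 : affTFun n i j k = k := by simp [affTFun, key, h1, h2]
      rw [e1, e1]

/-- The affine reflection `t_{ij}` (interpreted as the identity when `i ≡ j (mod n)`). -/
noncomputable def affT (n : ℕ) (i j : ℤ) : Equiv.Perm ℤ :=
  if h : (j - i) % (n : ℤ) = 0 then 1
  else Function.Involutive.toPerm _ (affTFun_involutive h)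

/-- The simple reflection `s_i = t_{i,i+1}` of `S̃_n`. -/
noncomputable def affS (n : ℕ) (i : ℤ) : Equiv.Perm ℤ := affT n i (i + 1)

/-- Coxeter length: minimal length of a word in the simple reflections `s_1, …, s_n`. -/
noncomputable def wordLength (n : ℕ) (π : Equiv.Perm ℤ) : ℕ :=
  sInf {l : ℕ | ∃ w : List ℤ,
    (∀ x ∈ w, 1 ≤ x ∧ x ≤ (n : ℤ)) ∧ (w.map (affS n)).prod = π ∧ w.length = l}

/-- The set of inversions of `π`, up to the diagonal translation relation. -/
def InvPair (π : Equiv.Perm ℤ) : Type :=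
  {p : ℤ × ℤ // p.1 < p.2 ∧ π p.2 < π p.1}

/-- The number of equivalence classes of inversions of `π` under
`(a,b) ~ (a + mn, b + mn)`. -/
noncomputable def invLength (n : ℕ) (π : Equiv.Perm ℤ) : ℕ :=
  Nat.card (Quot fun p q : InvPair π =>
    ∃ m : ℤ, q.1.1 = p.1.1 + m * n ∧ q.1.2 = p.1.2 + m * n)

/-- Entry `c_i` of the code of an affine permutation. -/
noncomputable def codeEntry (π : Equiv.Perm ℤ) (i : ℤ) : ℕ :=
  Nat.card {j : ℤ // i < j ∧ π j < π i}

/-- Entry `ĉ_i` of the involution code of an affine involution. -/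
noncomputable def icodeEntry (z : Equiv.Perm ℤ) (i : ℤ) : ℕ :=
  Nat.card {j : ℤ // i < j ∧ z j < z i ∧ z j ≤ i}

/-- `ℓ'(z)`: `n` minus the number of orbits of `z` acting on `ℤ/nℤ`. -/
noncomputable def lprime (n : ℕ) (z : Equiv.Perm ℤ) : ℕ :=
  n - Nat.card (Quot fun a b : ZMod n => ((z (a.val : ℤ) : ℤ) : ZMod n) = b)

/-- The characterizing properties of the Demazure (0-Hecke) product on `S̃_n`:
closure, associativity, `s_i ∘ s_i = s_i`, and agreement with the group product
on length-additive factorizations. -/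
def IsDemazure (n : ℕ) (D : Equiv.Perm ℤ → Equiv.Perm ℤ → Equiv.Perm ℤ) : Prop :=
  (∀ a b, IsAffine n a → IsAffine n b → IsAffine n (D a b)) ∧
  (∀ a b c, IsAffine n a → IsAffine n b → IsAffine n c →
    D (D a b) c = D a (D b c)) ∧
  (∀ i : ℤ, D (affS n i) (affS n i) = affS n i) ∧
  (∀ a b, IsAffine n a → IsAffine n b →
    wordLength n (a * b) = wordLength n a + wordLength n b → D a b = a * b)

/-- The set of Hecke atoms `{π : π⁻¹ ∘ π = z}`. -/
def AHecke (n : ℕ) (D : Equiv.Perm ℤ → Equiv.Perm ℤ → Equiv.Perm ℤ)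
    (z : Equiv.Perm ℤ) : Set (Equiv.Perm ℤ) :=
  {π | IsAffine n π ∧ D π⁻¹ π = z}

/-- The set of atoms: minimal-length Hecke atoms. -/
def DemAtoms (n : ℕ) (D : Equiv.Perm ℤ → Equiv.Perm ℤ → Equiv.Perm ℤ)
    (z : Equiv.Perm ℤ) : Set (Equiv.Perm ℤ) :=
  {π | π ∈ AHecke n D z ∧ ∀ σ ∈ AHecke n D z, wordLength n π ≤ wordLength n σ}

/-- The Bruhat covering relation on `S̃_n`. -/
def BruhatCov (n : ℕ) (a b : Equiv.Perm ℤ) : Prop :=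
  (∃ i j : ℤ, i < j ∧ (j - i) % (n : ℤ) ≠ 0 ∧ b = a * affT n i j) ∧
  wordLength n b = wordLength n a + 1

/-- The Bruhat order on `S̃_n`. -/
def BruhatLE (n : ℕ) : Equiv.Perm ℤ → Equiv.Perm ℤ → Prop :=
  Relation.ReflTransGen (BruhatCov n)

/-- The covering relation of the Bruhat order restricted to involutions in `S̃_n`. -/
def BruhatCovI (n : ℕ) (y z : Equiv.Perm ℤ) : Prop :=
  IsAffine n y ∧ IsAffine n z ∧ y⁻¹ = y ∧ z⁻¹ = z ∧
  BruhatLE n y z ∧ y ≠ z ∧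
  ∀ w : Equiv.Perm ℤ, IsAffine n w → w⁻¹ = w →
    BruhatLE n y w → BruhatLE n w z → w = y ∨ w = z

/-- Strict dominance order on partitions (written as weakly decreasing functions). -/
def DomLT (p q : ℕ → ℕ) : Prop :=
  p ≠ q ∧ ∀ k : ℕ, ∑ i ∈ Finset.range k, p i ≤ ∑ i ∈ Finset.range k, q i

/-- The shape `λ(π)`: the transpose of the partition sorting the code of `π⁻¹`,
recorded as the weakly decreasing function `k ↦ λ(π)_{k+1}`. -/
noncomputable def affShape (n : ℕ) (π : Equiv.Perm ℤ) : ℕ → ℕ :=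
  fun k => Multiset.countP (fun x => k < x)
    ((Finset.Icc (1 : ℤ) (n : ℤ)).val.map (codeEntry π⁻¹))

/-- The shape `μ(z)`: the transpose of the partition sorting the involution code of `z`,
recorded as the weakly decreasing function `k ↦ μ(z)_{k+1}`. -/
noncomputable def invShape (n : ℕ) (z : Equiv.Perm ℤ) : ℕ → ℕ :=
  fun k => Multiset.countP (fun x => k < x)
    ((Finset.Icc (1 : ℤ) (n : ℤ)).val.map (icodeEntry z))

/-- The weakly decreasing rearrangement of a multiset of naturals, padded by zeros. -/
noncomputable def rearr (s : Multiset ℕ) : ℕ → ℕ :=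
  fun k => ((s.sort (· ≤ ·)).reverse).getD k 0

/-- Remove the entries of a list of integers that repeat an earlier residue mod `n`. -/
def dedupMod (n : ℕ) : List ℤ → List ℤ
  | [] => []
  | x :: xs => x :: dedupMod n (xs.filter fun y => (y - x) % (n : ℤ) ≠ 0)
termination_by l => l.length
decreasing_by
  simp only [List.length_cons]
  exact Nat.lt_succ_of_le (by
    simp only [List.length_unattach]
    exact (List.length_filter_le _ _).trans (by simp))

/-- The window `[[z(a₁), a₁, z(a₂), a₂, …]]` of `α_min(z)⁻¹`, where `a₁ < a₂ < ⋯`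
are the elements `a ∈ [n]` with `a ≤ z(a)`. -/
noncomputable def aminWindow (n : ℕ) (z : Equiv.Perm ℤ) : List ℤ :=
  dedupMod n
    ((((Finset.Icc (1 : ℤ) (n : ℤ)).sort (· ≤ ·)).filter fun a => a ≤ z a).flatMap
      fun a => [z a, a])

/-- Cyclically decreasing elements of `S̃_n`. -/
def IsCycDec (n : ℕ) (π : Equiv.Perm ℤ) : Prop :=
  ∃ w : List ℤ,
    (∀ x ∈ w, 1 ≤ x ∧ x ≤ (n : ℤ)) ∧ (w.map (affS n)).prod = π ∧
    w.length = wordLength n π ∧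
    w.Pairwise fun a b => (a + 1 - b) % (n : ℤ) ≠ 0

/-- The coefficient of the monomial `∏ₖ xₖ₊₁^(α k)` in Lam's affine Stanley symmetric
function `F_π`: the number of length-additive factorizations of `π` into cyclically
decreasing factors of lengths prescribed by `α`. -/
noncomputable def stanleyCoeff (n : ℕ) (π : Equiv.Perm ℤ) (α : ℕ →₀ ℕ) : ℕ :=
  Nat.card {f : ℕ → Equiv.Perm ℤ //
    (∀ k, IsCycDec n (f k)) ∧ (∀ k, wordLength n (f k) = α k) ∧
    (∑ k ∈ α.support, α k) = wordLength n π ∧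
    ∃ N : ℕ, (∀ k, N ≤ k → f k = 1) ∧ ((List.range N).map f).prod = π}

/-- The set `Φ⁻_r(y)` of Bruhat covers of `y` of the form `τⁿ_{i r}(y)` with `i < r`
and `i ∉ {r, y(r)} + nℤ`. -/
def PhiMinus (n : ℕ) (τ : ℤ → ℤ → Equiv.Perm ℤ → Equiv.Perm ℤ)
    (y : Equiv.Perm ℤ) (r : ℤ) : Set (Equiv.Perm ℤ) :=
  {z | BruhatCovI n y z ∧ ∃ i : ℤ, i < r ∧ (i - r) % (n : ℤ) ≠ 0 ∧
    (i - y r) % (n : ℤ) ≠ 0 ∧ z = τ i r y}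

/-- The set `Φ⁺_r(y)` of Bruhat covers of `y` of the form `τⁿ_{r j}(y)` with `r < j`
and `j ∉ {r, y(r)} + nℤ`. -/
def PhiPlus (n : ℕ) (τ : ℤ → ℤ → Equiv.Perm ℤ → Equiv.Perm ℤ)
    (y : Equiv.Perm ℤ) (r : ℤ) : Set (Equiv.Perm ℤ) :=
  {z | BruhatCovI n y z ∧ ∃ j : ℤ, r < j ∧ (j - r) % (n : ℤ) ≠ 0 ∧
    (j - y r) % (n : ℤ) ≠ 0 ∧ z = τ r j y}

/-- The affine symmetric group as a subtype of `Equiv.Perm ℤ`. -/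
abbrev AffPerm (n : ℕ) := {π : Equiv.Perm ℤ // IsAffine n π}

/-- The coproduct `Δ(π) = Σ_{π ≐ π'π''} π' ⊗ π''` on `ℚ S̃_n`. -/
noncomputable def affComul (n : ℕ) :
    (AffPerm n →₀ ℚ) →ₗ[ℚ] TensorProduct ℚ (AffPerm n →₀ ℚ) (AffPerm n →₀ ℚ) :=
  Finsupp.lift _ ℚ _ fun π : AffPerm n =>
    ∑ᶠ p ∈ {p : AffPerm n × AffPerm n |
        p.1.val * p.2.val = π.val ∧
        wordLength n π.val = wordLength n p.1.val + wordLength n p.2.val},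
      (Finsupp.single p.1 (1 : ℚ)) ⊗ₜ[ℚ] (Finsupp.single p.2 (1 : ℚ))

namespace AuxICode

variable {n : ℕ}

/-- periodicity -/
def Per (n : ℕ) (z : Equiv.Perm ℤ) : Prop := ∀ i : ℤ, z (i + n) = z i + n

lemma per_add {z : Equiv.Perm ℤ} (hp : Per n z) : ∀ (k : ℤ) (i : ℤ), z (i + k * n) = z i + k * n := by
  intro k
  induction k using Int.induction_on with
  | zero => simp
  | succ k ih =>
      intro i
      have h1 : i + (k + 1) * n = (i + k * n) + n := by ring
      rw [h1, hp, ih]; ring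
  | pred k ih =>
      intro i
      have h1 : i + (-(k:ℤ) - 1) * n + (n : ℤ) = i + (-(k:ℤ)) * n := by ring
      have h2 := hp (i + (-(k:ℤ) - 1) * n)
      rw [h1] at h2
      have h3 := ih i
      have h4 : (-(k:ℤ) - 1) * n = -(k:ℤ) * n - n := by ring
      omega

lemma per_dvd {z : Equiv.Perm ℤ} (hp : Per n z) {i j : ℤ} (h : (n : ℤ) ∣ (j - i)) :
    z j = z i + (j - i) := by
  obtain ⟨k, hk⟩ := h
  have h1 : j = i + k * n := by rw [mul_comm]; omega
  rw [h1, per_add hp]; rw [mul_comm]; omega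

lemma per_mul {f g : Equiv.Perm ℤ} (hf : Per n f) (hg : Per n g) : Per n (f * g) := by
  intro x
  simp only [Equiv.Perm.mul_apply, hg x, hf (g x)]

/-- the counting set -/
def S (z : Equiv.Perm ℤ) (i : ℤ) : Set ℤ := {j | i < j ∧ z j ≤ min i (z i - 1)}

lemma icode_eq (z : Equiv.Perm ℤ) (i : ℤ) : icodeEntry z i = (S z i).ncard := by
  rw [icodeEntry, ← Nat.card_coe_set_eq]
  apply Nat.card_congr
  apply Equiv.subtypeEquivRight
  intro j
  simp only [S, Set.mem_setOf_eq]
  omega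

lemma S_finite {z : Equiv.Perm ℤ} (hn : 0 < n) (hp : Per n z) (i t : ℤ) :
    {j : ℤ | i < j ∧ z j ≤ t}.Finite := by
  have hne : (Finset.Icc (1 : ℤ) (n : ℤ)).Nonempty := by
    refine ⟨1, ?_⟩; simp; exact_mod_cast hn
  set B := (Finset.Icc (1 : ℤ) (n : ℤ)).sup' hne (fun r => r - z r) with hB
  apply Set.Finite.subset (Set.finite_Ioc i (t + B))
  rintro j ⟨hj1, hj2⟩
  refine ⟨hj1, ?_⟩
  set r : ℤ := (j - 1) % n + 1 with hr
  have hnn : (0:ℤ) < n := by exact_mod_cast hn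
  have h1 : 0 ≤ (j - 1) % n := Int.emod_nonneg _ (by omega)
  have h2 : (j - 1) % n < n := Int.emod_lt_of_pos _ hnn
  have hdvd : (n : ℤ) ∣ (j - r) := by
    have h3 : j - r = (j - 1) - (j - 1) % n := by omega
    rw [h3, Int.emod_def]
    exact ⟨(j-1)/n, by ring⟩
  have hzr : z j = z r + (j - r) := per_dvd hp hdvd
  have hmem : r ∈ Finset.Icc (1 : ℤ) (n : ℤ) := by simp; omega
  have hle : r - z r ≤ B := Finset.le_sup' (fun r => r - z r) hmem
  omega


lemma S_fin {z : Equiv.Perm ℤ} (hn : 0 < n) (hp : Per n z) (i : ℤ) : (S z i).Finite :=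
  S_finite hn hp i _

/-- periodicity of the code -/
lemma S_shift {z : Equiv.Perm ℤ} (hp : Per n z) (i : ℤ) :
    S z (i + n) = (fun j => j + (n : ℤ)) '' S z i := by
  ext j
  simp only [S, Set.mem_setOf_eq, Set.mem_image]
  constructor
  · rintro ⟨h1, h2⟩
    refine ⟨j - n, ⟨by omega, ?_⟩, by omega⟩
    have hzj : z j = z (j - n) + n := by
      have := hp (j - n); simpa using this
    have hzi : z (i + n) = z i + n := hp i
    omega
  · rintro ⟨j', ⟨h1, h2⟩, h3⟩
    have hzj : z j = z j' + n := by rw [← h3]; exact hp j'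
    have hzi : z (i + n) = z i + n := hp i
    constructor
    · omega
    · omega

lemma icode_shift {z : Equiv.Perm ℤ} (hp : Per n z) (i : ℤ) :
    icodeEntry z (i + n) = icodeEntry z i := by
  rw [icode_eq, icode_eq, S_shift hp]
  exact Set.ncard_image_of_injective _ (fun a b => by omega)

lemma icode_dvd {z : Equiv.Perm ℤ} (hp : Per n z) {i j : ℤ} (h : (n : ℤ) ∣ (j - i)) :
    icodeEntry z j = icodeEntry z i := by
  obtain ⟨k, hk⟩ := h
  have : ∀ m : ℤ, ∀ i : ℤ, icodeEntry z (i + m * n) = icodeEntry z i := by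
    intro m
    induction m using Int.induction_on with
    | zero => simp
    | succ m ih =>
        intro i
        have h1 : i + ((m:ℤ) + 1) * n = (i + m * n) + n := by ring
        rw [h1, icode_shift hp, ih]
    | pred m ih =>
        intro i
        have h1 : i + (-(m:ℤ) - 1) * n + (n:ℤ) = i + (-(m:ℤ)) * n := by ring
        have h2 := icode_shift hp (i + (-(m:ℤ) - 1) * n)
        rw [h1] at h2
        rw [← h2, ih]
    
  have h1 : j = i + k * n := by rw [mul_comm]; omega
  rw [h1, this]

section Sigma

variable (n) in
/-- the function swapping the classes of `i` and `i+1` mod `n` -/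
def sg (i : ℤ) : ℤ → ℤ := fun k =>
  if (n : ℤ) ∣ (k - i) then k + 1 else if (n : ℤ) ∣ (k - (i + 1)) then k - 1 else k

variable (hn2 : 2 ≤ n) {i : ℤ}

lemma not_dvd_one (hn2 : 2 ≤ n) : ¬ (n : ℤ) ∣ (1 : ℤ) := by
  intro h
  have := Int.le_of_dvd one_pos h
  omega

lemma sg_cl0 (hn2 : 2 ≤ n) {k : ℤ} (h : (n : ℤ) ∣ (k - i)) : sg n i k = k + 1 := by
  rw [sg, if_pos h]

lemma sg_cl1 (hn2 : 2 ≤ n) {k : ℤ} (h : (n : ℤ) ∣ (k - (i + 1))) : sg n i k = k - 1 := by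
  have h0 : ¬ (n : ℤ) ∣ (k - i) := by
    intro h'
    exact not_dvd_one hn2 (by have := Int.dvd_sub h' h; simpa using this)
  rw [sg, if_neg h0, if_pos h]

lemma sg_out (hn2 : 2 ≤ n) {k : ℤ} (h0 : ¬ (n : ℤ) ∣ (k - i)) (h1 : ¬ (n : ℤ) ∣ (k - (i + 1))) :
    sg n i k = k := by
  rw [sg, if_neg h0, if_neg h1]

lemma sg_invol (hn2 : 2 ≤ n) (i : ℤ) : Function.Involutive (sg n i) := by
  intro k
  by_cases h0 : (n : ℤ) ∣ (k - i)
  · rw [sg_cl0 hn2 h0, sg_cl1 hn2 (by simpa using h0)]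
    omega
  · by_cases h1 : (n : ℤ) ∣ (k - (i + 1))
    · rw [sg_cl1 hn2 h1]
      rw [sg_cl0 hn2 (by have : k - 1 - i = k - (i+1) := by ring
                         rw [this]; exact h1)]
      omega
    · rw [sg_out hn2 h0 h1, sg_out hn2 h0 h1]

variable (n) in
/-- σ as a permutation -/
noncomputable def sgE (hn2 : 2 ≤ n) (i : ℤ) : Equiv.Perm ℤ :=
  (sg_invol hn2 i).toPerm

@[simp] lemma sgE_apply (hn2 : 2 ≤ n) (i k : ℤ) : sgE n hn2 i k = sg n i k := rfl

lemma sgE_per (hn2 : 2 ≤ n) (i : ℤ) : Per n (sgE n hn2 i) := by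
  intro k
  simp only [sgE_apply]
  by_cases h0 : (n : ℤ) ∣ (k - i)
  · rw [sg_cl0 hn2 h0, sg_cl0 hn2 (by have : k + n - i = (k - i) + n := by ring
                                      rw [this]; exact Dvd.dvd.add h0 ⟨1, by ring⟩)]
    omega
  · by_cases h1 : (n : ℤ) ∣ (k - (i + 1))
    · rw [sg_cl1 hn2 h1, sg_cl1 hn2 (by have : k + n - (i+1) = (k - (i+1)) + n := by ring
                                        rw [this]; exact Dvd.dvd.add h1 ⟨1, by ring⟩)]
      omega
    · rw [sg_out hn2 h0 h1, sg_out hn2 ?_ ?_]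
      · intro h; apply h0
        have : k - i = (k + n - i) - n := by ring
        rw [this]; exact Int.dvd_sub h ⟨1, by ring⟩
      · intro h; apply h1
        have : k - (i+1) = (k + n - (i+1)) - n := by ring
        rw [this]; exact Int.dvd_sub h ⟨1, by ring⟩

lemma sgE_sq (hn2 : 2 ≤ n) (i : ℤ) : sgE n hn2 i * sgE n hn2 i = 1 := by
  ext k
  simp [sg_invol hn2 i k]

end Sigma

section Vd

variable {z : Equiv.Perm ℤ}

/-- visible descent -/
def Vd (z : Equiv.Perm ℤ) (i : ℤ) : Prop := z (i + 1) < z i ∧ z (i + 1) ≤ i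

lemma vd_code_gt (hn : 0 < n) (hp : Per n z) {i : ℤ} (h : Vd z i) :
    icodeEntry z (i + 1) + 1 ≤ icodeEntry z i := by
  obtain ⟨h1, h2⟩ := h
  rw [icode_eq, icode_eq]
  have hsub : insert (i + 1) (S z (i + 1)) ⊆ S z i := by
    rintro j (rfl | hj)
    · exact ⟨by omega, by simp only [le_min_iff]; omega⟩
    · obtain ⟨hj1, hj2⟩ := hj
      simp only [le_min_iff] at hj2
      exact ⟨by omega, by simp only [le_min_iff]; omega⟩
  have hni : (i + 1) ∉ S z (i + 1) := by
    rintro ⟨h', _⟩; omega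
  calc (S z (i+1)).ncard + 1 = (insert (i+1) (S z (i+1))).ncard := by
        rw [Set.ncard_insert_of_notMem hni (S_fin hn hp _)]
    _ ≤ (S z i).ncard := Set.ncard_le_ncard hsub (S_fin hn hp _)

lemma not_vd_code_le (hn : 0 < n) (hp : Per n z) {i : ℤ} (h : ¬ Vd z i) :
    icodeEntry z i ≤ icodeEntry z (i + 1) := by
  rw [Vd, not_and_or, not_lt, not_le] at h
  rw [icode_eq, icode_eq]
  have hne : z (i + 1) ≠ z i := z.injective.ne (by omega)
  have hsub : S z i ⊆ S z (i + 1) := by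
    rintro j ⟨hj1, hj2⟩
    simp only [le_min_iff] at hj2
    have hji : j ≠ i + 1 := by
      rintro rfl; rcases h with h | h <;> omega
    refine ⟨by omega, ?_⟩
    simp only [le_min_iff]
    rcases h with h | h <;> omega
  exact Set.ncard_le_ncard hsub (S_fin hn hp _)

lemma exists_vd (hn : 0 < n) (hp : Per n z) (hz : z⁻¹ = z) (hne : z ≠ 1) : ∃ i, Vd z i := by
  have hinv : ∀ x, z (z x) = x := by
    intro x
    nth_rewrite 1 [← hz]
    exact Equiv.symm_apply_apply z x
  by_contra hvd
  push_neg at hvd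
  simp only [Vd, not_and_or, not_lt, not_le] at hvd
  -- find j with z j < j
  obtain ⟨x, hx⟩ : ∃ x, z x ≠ x := by
    by_contra hh
    push_neg at hh
    exact hne (Equiv.ext hh)
  obtain ⟨j, hj⟩ : ∃ j, z j < j := by
    rcases lt_or_gt_of_ne hx with h | h
    · exact ⟨x, h⟩
    · exact ⟨z x, by rw [hinv]; exact h⟩
  -- the chain
  have chain : ∀ m : ℕ, z (j - m) < j - m ∧ z (j - (m + 1 : ℕ)) < z (j - m) := by
    intro m
    induction m with
    | zero =>
        refine ⟨by simpa using hj, ?_⟩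
        have h2 := hvd (j - 1)
        simp only [sub_add_cancel] at h2
        have hne' : z (j - 1) ≠ z j := z.injective.ne (by omega)
        have hc1 : j - ((0:ℕ):ℤ) = j := by simp
        have hc2 : j - ((0+1:ℕ):ℤ) = j - 1 := by push_cast; ring
        rw [hc1, hc2]
        rcases h2 with h2 | h2 <;> omega
    | succ m ih =>
        obtain ⟨ih1, ih2⟩ := ih
        have h1 : z (j - (m + 1 : ℕ)) < j - (m + 1 : ℕ) := by push_cast at ih1 ih2 ⊢; omega
        refine ⟨h1, ?_⟩
        have h2 := hvd (j - (m + 1 : ℕ) - 1)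
        simp only [sub_add_cancel] at h2
        have hne' : z (j - (m + 1 : ℕ) - 1) ≠ z (j - (m + 1 : ℕ)) := z.injective.ne (by omega)
        have hc : j - (m + 1 + 1 : ℕ) = j - (m + 1 : ℕ) - 1 := by push_cast; ring
        rw [hc]
        rcases h2 with h2 | h2 <;> omega
  have desc : ∀ k d : ℕ, z (j - (k + d : ℕ)) ≤ z (j - k) - d := by
    intro k d
    induction d with
    | zero => simp
    | succ d ih =>
        have h1 := (chain (k + d)).2
        have hc : j - (k + d + 1 : ℕ) = j - (k + (d+1) : ℕ) := by push_cast; ring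
        rw [hc] at h1
        push_cast at ih h1 ⊢
        omega
  have hval : ∀ k : ℕ, k ≤ n → z (j - k) = z j - k := by
    intro k hk
    have h1 : z (j - k) ≤ z j - k := by simpa using desc 0 k
    have h2 : z (j - n) = z j - n := by
      have := per_dvd hp (show (n:ℤ) ∣ (j - n) - j by simp)
      omega
    have h3 := desc k (n - k)
    have hc : (k + (n - k) : ℕ) = n := by omega
    rw [hc, h2] at h3
    have : ((n - k : ℕ) : ℤ) = (n : ℤ) - k := by push_cast; omega
    omega
  -- z is a translation
  have htr : ∀ x : ℤ, z x = x + (z j - j) := by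
    intro x
    set k : ℤ := (j - x) % n with hk
    have hnn : (0:ℤ) < n := by exact_mod_cast hn
    have h1 : 0 ≤ k := Int.emod_nonneg _ (by omega)
    have h2 : k < n := Int.emod_lt_of_pos _ hnn
    have hdvd : (n : ℤ) ∣ (x - (j - k)) := by
      have h3 : x - (j - k) = -((j - x) - (j-x) % n) := by omega
      rw [h3, Int.emod_def]
      exact ⟨-((j-x)/n), by ring⟩
    have h4 : z x = z (j - k) + (x - (j - k)) := per_dvd hp hdvd
    have h5 : z (j - k.toNat) = z j - k.toNat := hval k.toNat (by omega)
    have h6 : (k.toNat : ℤ) = k := by omega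
    rw [h6] at h5
    omega
  have : z (z j) = j := hinv j
  rw [htr (z j)] at this
  omega

end Vd

section Transform

variable {z : Equiv.Perm ℤ} {i : ℤ}

lemma dvd_dist {x : ℤ} (h : (n:ℤ) ∣ x) (hx : x ≠ 0) : (n:ℤ) ≤ x ∨ x ≤ -(n:ℤ) := by
  rcases lt_or_gt_of_ne hx with h1 | h1
  · right
    have := Int.le_of_dvd (by omega) (dvd_neg.mpr h)
    omega
  · left
    exact Int.le_of_dvd h1 h

/-- comparison with an out-of-class bound -/
lemma sg_lt_k (hn2 : 2 ≤ n) {k j : ℤ} (hk0 : ¬ (n:ℤ) ∣ (k - i)) (hk1 : ¬ (n:ℤ) ∣ (k - (i+1))) :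
    k < sg n i j ↔ k < j := by
  by_cases h0 : (n:ℤ) ∣ (j - i)
  · rw [sg_cl0 hn2 h0]
    have : k ≠ j := by rintro rfl; exact hk0 h0
    omega
  · by_cases h1 : (n:ℤ) ∣ (j - (i+1))
    · rw [sg_cl1 hn2 h1]
      have : j ≠ k + 1 := by
        rintro rfl
        exact hk0 (by have : k + 1 - (i+1) = k - i := by ring
                      rwa [this] at h1)
      omega
    · rw [sg_out hn2 h0 h1]

lemma sg_le_k (hn2 : 2 ≤ n) {k v : ℤ} (hk0 : ¬ (n:ℤ) ∣ (k - i)) (hk1 : ¬ (n:ℤ) ∣ (k - (i+1))) :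
    sg n i v ≤ k ↔ v ≤ k := by
  have := sg_lt_k (i := i) hn2 hk0 hk1 (j := v)
  omega

/-- monotonicity of σ away from swapped pairs -/
lemma sg_lt_iff (hn2 : 2 ≤ n) {u v : ℤ}
    (h1 : ¬ ((n:ℤ) ∣ (u - i) ∧ v = u + 1)) (h2 : ¬ ((n:ℤ) ∣ (v - i) ∧ u = v + 1)) :
    sg n i u < sg n i v ↔ u < v := by
  have hnn : (2:ℤ) ≤ n := by exact_mod_cast hn2
  by_cases hu0 : (n:ℤ) ∣ (u - i)
  · rw [sg_cl0 hn2 hu0]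
    by_cases hv0 : (n:ℤ) ∣ (v - i)
    · rw [sg_cl0 hn2 hv0]; omega
    · by_cases hv1 : (n:ℤ) ∣ (v - (i+1))
      · rw [sg_cl1 hn2 hv1]
        have hd : (n:ℤ) ∣ (v - u - 1) := by
          have : v - u - 1 = (v - (i+1)) - (u - i) := by ring
          rw [this]; exact Int.dvd_sub hv1 hu0
        have hne : v - u - 1 ≠ 0 := by
          intro h; exact h1 ⟨hu0, by omega⟩
        rcases dvd_dist hd hne with h | h <;> omega
      · rw [sg_out hn2 hv0 hv1]
        have : v ≠ u + 1 := fun h => h1 ⟨hu0, h⟩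
        omega
  · by_cases hu1 : (n:ℤ) ∣ (u - (i+1))
    · rw [sg_cl1 hn2 hu1]
      by_cases hv0 : (n:ℤ) ∣ (v - i)
      · rw [sg_cl0 hn2 hv0]
        have hd : (n:ℤ) ∣ (u - v - 1) := by
          have : u - v - 1 = (u - (i+1)) - (v - i) := by ring
          rw [this]; exact Int.dvd_sub hu1 hv0
        have hne : u - v - 1 ≠ 0 := by
          intro h; exact h2 ⟨hv0, by omega⟩
        rcases dvd_dist hd hne with h | h <;> omega
      · by_cases hv1 : (n:ℤ) ∣ (v - (i+1))
        · rw [sg_cl1 hn2 hv1]; omega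
        · rw [sg_out hn2 hv0 hv1]
          have : u ≠ v := by
            rintro rfl; exact hv1 hu1
          omega
    · rw [sg_out hn2 hu0 hu1]
      by_cases hv0 : (n:ℤ) ∣ (v - i)
      · rw [sg_cl0 hn2 hv0]
        have h3 : u ≠ v := by rintro rfl; exact hu0 hv0
        have h4 : u ≠ v + 1 := by
          rintro rfl
          exact hu1 (by have h5 : v + 1 - (i+1) = v - i := by ring
                        rwa [h5])
        omega
      · by_cases hv1 : (n:ℤ) ∣ (v - (i+1))
        · rw [sg_cl1 hn2 hv1]
          have : v ≠ u + 1 := by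
            rintro rfl
            exact hu0 (by have : u + 1 - (i+1) = u - i := by ring
                          rwa [this] at hv1)
          omega
        · rw [sg_out hn2 hv0 hv1]

section CaseB

variable (hn2 : 2 ≤ n) (hp : Per n z) (hinv : ∀ x, z (z x) = x)
variable (hvd : Vd z i) (hna : z (i + 1) ≠ i)

include hp hinv hvd in
lemma a_not_cl1 : ¬ (n:ℤ) ∣ (z (i+1) - (i+1)) := by
  intro h
  have h1 : z (z (i+1)) = z (i+1) + (z (i+1) - (i+1)) := per_dvd hp h
  rw [hinv] at h1
  have := hvd.2
  omega

include hp hinv hvd hna in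
lemma case_b_i {k : ℤ} (hk0 : ¬ (n:ℤ) ∣ (k - i)) (hk1 : ¬ (n:ℤ) ∣ (k - (i+1))) :
    icodeEntry (sgE n hn2 i * z * sgE n hn2 i) k = icodeEntry z k := by
  have ha1 : z (i+1) < z i := hvd.1
  have ha2 : z (i+1) ≤ i - 1 := by
    have := hvd.2; omega
  rw [icode_eq, icode_eq]
  have hset : S (sgE n hn2 i * z * sgE n hn2 i) k = (sg n i) ⁻¹' (S z k) := by
    ext j
    simp only [S, Set.mem_setOf_eq, Set.mem_preimage, Equiv.Perm.mul_apply, sgE_apply,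
      le_min_iff]
    rw [sg_out hn2 hk0 hk1]
    rw [sg_lt_k hn2 hk0 hk1]
    by_cases hkj : k < j
    · simp only [hkj, true_and]
      rw [sg_le_k hn2 hk0 hk1]
      set v := z (sg n i j) with hv
      set w := z k with hw
      -- pair cases
      by_cases hP1 : (n:ℤ) ∣ (v - i) ∧ w = v + 1
      · obtain ⟨hd, hw1⟩ := hP1
        have hzv : z v = z i + (v - i) := per_dvd hp hd
        have hzw : z w = z (i+1) + (w - (i+1)) := by
          apply per_dvd hp
          have : w - (i+1) = v - i := by omega
          rw [this]; exact hd
        have hk : k = z w := by rw [hw, hinv]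
        have hsv : sg n i v = v + 1 := sg_cl0 hn2 hd
        have hsw : sg n i w = w - 1 := by
          apply sg_cl1 hn2
          have : w - (i+1) = v - i := by omega
          rw [this]; exact hd
        constructor
        · rintro ⟨_, hlt⟩
          rw [hsv, hsw] at hlt; omega
        · rintro ⟨hle, _⟩
          omega
      · by_cases hP2 : (n:ℤ) ∣ (w - i) ∧ v = w + 1
        · -- impossible given k < j
          exfalso
          obtain ⟨hd, hv1⟩ := hP2
          have hzw : z w = z i + (w - i) := per_dvd hp hd
          have hzv : z v = z (i+1) + (v - (i+1)) := by
            apply per_dvd hp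
            have : v - (i+1) = w - i := by omega
            rw [this]; exact hd
          have hk : k = z w := by rw [hw, hinv]
          have hj : j = sg n i (z v) := by
            rw [hv, hinv, sg_invol hn2 i j]
          have hzv2 : z v = z (i+1) + (w - i) := by
            rw [hzv]; congr 1; omega
          -- class of z v = z(i+1) + (w-i)
          by_cases hacl : (n:ℤ) ∣ (z (i+1) - i)
          · have : sg n i (z v) = z v + 1 := by
              apply sg_cl0 hn2
              have : z v - i = (z (i+1) - i) + (w - i) := by omega
              rw [this]
              exact Dvd.dvd.add hacl hd
            rw [hj, this] at hkj
            omega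
          · have hacl1 : ¬ (n:ℤ) ∣ (z (i+1) - (i+1)) := a_not_cl1 hp hinv hvd
            have : sg n i (z v) = z v := by
              apply sg_out hn2
              · intro h; apply hacl
                have : z (i+1) - i = (z v - i) - (w - i) := by omega
                rw [this]; exact Int.dvd_sub h hd
              · intro h; apply hacl1
                have : z (i+1) - (i+1) = (z v - (i+1)) - (w - i) := by omega
                rw [this]; exact Int.dvd_sub h hd
            rw [hj, this] at hkj
            omega
        · -- generic case
          push_neg at hP1 hP2
          have := sg_lt_iff (i := i) hn2 (u := v) (v := w)
            (by intro ⟨hh1, hh2⟩; exact hP1 hh1 hh2)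
            (by intro ⟨hh1, hh2⟩; exact hP2 hh1 hh2)
          omega
    · simp only [hkj, false_and]
  rw [hset]
  nth_rewrite 2 [← Set.image_preimage_eq (S z k) (sg_invol hn2 i).surjective]
  exact (Set.ncard_image_of_injective _ (sg_invol hn2 i).injective).symm

include hp hinv in
lemma b_fact1 (hacl : (n:ℤ) ∣ (z (i+1) - i)) : z i = i + 1 + (i - z (i+1)) := by
  have h1 := per_dvd hp (i := i) (j := z (i+1)) hacl
  rw [hinv] at h1
  omega

include hp hinv in
lemma b_fact2 (hbcl : (n:ℤ) ∣ (z i - (i+1))) : z (i+1) = i - (z i - (i+1)) := by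
  have h1 := per_dvd hp (i := i + 1) (j := z i) hbcl
  rw [hinv] at h1
  omega

include hp hinv in
lemma b_fact3 (hbcl : (n:ℤ) ∣ (z i - i)) : z i = i := by
  have h1 := per_dvd hp (i := i) (j := z i) hbcl
  rw [hinv] at h1
  omega

lemma sg_ge (x : ℤ) : x - 1 ≤ sg n i x := by
  unfold sg; split_ifs <;> omega

lemma sg_le' (x : ℤ) : sg n i x ≤ x + 1 := by
  unfold sg; split_ifs <;> omega

lemma g1_lemma (hn2 : 2 ≤ n) {j : ℤ} (hj : j ≠ i + 1) : i < j ↔ i + 1 < sg n i j := by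
  have hni : (2:ℤ) ≤ n := by exact_mod_cast hn2
  by_cases h0 : (n:ℤ) ∣ (j - i)
  · rw [sg_cl0 hn2 h0]; omega
  · by_cases h1 : (n:ℤ) ∣ (j - (i+1))
    · rw [sg_cl1 hn2 h1]
      rcases dvd_dist h1 (by omega) with h | h <;> omega
    · rw [sg_out hn2 h0 h1]; omega

include hp hinv hvd hna in
lemma case_b_ii :
    icodeEntry (sgE n hn2 i * z * sgE n hn2 i) i = icodeEntry z (i + 1) := by
  have ha1 : z (i+1) < z i := hvd.1
  have ha2 : z (i+1) ≤ i - 1 := by have := hvd.2; omega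
  have hA1 : ¬ (n:ℤ) ∣ (z (i+1) - (i+1)) := a_not_cl1 hp hinv hvd
  have hni : (2:ℤ) ≤ n := by exact_mod_cast hn2
  rw [icode_eq, icode_eq]
  have hset : S (sgE n hn2 i * z * sgE n hn2 i) i = (sg n i) ⁻¹' (S z (i + 1)) := by
    ext j
    simp only [S, Set.mem_setOf_eq, Set.mem_preimage, Equiv.Perm.mul_apply, sgE_apply,
      le_min_iff]
    rw [sg_cl0 hn2 (show (n:ℤ) ∣ (i - i) by simp)]
    have hii : (i:ℤ) + 1 - 1 = i := by ring
    by_cases hj1 : j = i + 1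
    · subst hj1
      rw [sg_cl1 hn2 (show (n:ℤ) ∣ (i + 1 - (i+1)) by simp), hii]
      constructor
      · rintro ⟨-, -, h3⟩
        exfalso
        by_cases hacl : (n:ℤ) ∣ (z (i+1) - i)
        · have hb := b_fact1 hp hinv hacl
          have hbc : (n:ℤ) ∣ (z i - (i+1)) := by
            obtain ⟨c, hc⟩ := hacl
            exact ⟨-c, by linear_combination hb - hc⟩
          rw [sg_cl1 hn2 hbc, sg_cl0 hn2 hacl] at h3
          omega
        · rw [sg_out hn2 hacl hA1] at h3
          have := sg_ge (n := n) (i := i) (z i)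
          omega
      · rintro ⟨h1, -⟩
        exfalso
        omega
    · rw [← g1_lemma hn2 hj1]
      by_cases hacl : (n:ℤ) ∣ (z (i+1) - i)
      · rw [sg_cl0 hn2 hacl]
        by_cases hsp2 : z (sg n i j) = z (i+1) + 1
        · -- special point : both sides fail
          have e1 : z (z (sg n i j)) = sg n i j := hinv _
          have e2 := per_dvd hp (i := i + 1) (j := z (i+1) + 1) (by
            have : z (i+1) + 1 - (i+1) = z (i+1) - i := by ring
            rw [this]; exact hacl)
          rw [hsp2, e2] at e1
          -- e1 : i + 1 + (z (i+1) + 1 - (i+1)) = sg n i j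
          have e3 : j = sg n i (sg n i j) := (sg_invol hn2 i j).symm
          obtain ⟨c, hc⟩ := hacl
          have e4 : sg n i (sg n i j) = sg n i j + 1 := by
            apply sg_cl0 hn2
            exact ⟨2 * c, by linear_combination 2 * hc - e1⟩
          rcases dvd_dist (⟨c, hc⟩ : (n:ℤ) ∣ (z (i+1) - i)) (by omega) with hd | hd
          · omega
          · constructor
            · rintro ⟨h1, -⟩; exfalso; omega
            · rintro ⟨h1, -⟩; exfalso; omega
        · by_cases hv0 : (n:ℤ) ∣ (z (sg n i j) - i)
          · rw [sg_cl0 hn2 hv0]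
            constructor
            · rintro ⟨h1, h2, h3⟩; exact ⟨h1, by omega, by omega⟩
            · rintro ⟨h1, h2, h3⟩; exact ⟨h1, by omega, by omega⟩
          · by_cases hv1 : (n:ℤ) ∣ (z (sg n i j) - (i+1))
            · rw [sg_cl1 hn2 hv1]
              have hva : z (sg n i j) ≠ z (i+1) := by
                intro h; rw [h] at hv1; exact hA1 hv1
              constructor
              · rintro ⟨h1, h2, h3⟩; exact ⟨h1, by omega, by omega⟩
              · rintro ⟨h1, h2, h3⟩; exact ⟨h1, by omega, by omega⟩
            · rw [sg_out hn2 hv0 hv1]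
              have hva : z (sg n i j) ≠ z (i+1) := by
                intro h; rw [h] at hv0; exact hv0 hacl
              constructor
              · rintro ⟨h1, h2, h3⟩; exact ⟨h1, by omega, by omega⟩
              · rintro ⟨h1, h2, h3⟩; exact ⟨h1, by omega, by omega⟩
      · rw [sg_out hn2 hacl hA1]
        by_cases hv0 : (n:ℤ) ∣ (z (sg n i j) - i)
        · rw [sg_cl0 hn2 hv0]
          have hva : z (sg n i j) ≠ z (i+1) - 1 := by
            intro h
            apply hA1
            have : z (i+1) - (i+1) = z (sg n i j) - i := by omega
            rw [this]; exact hv0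
          constructor
          · rintro ⟨h1, h2, h3⟩; exact ⟨h1, by omega, by omega⟩
          · rintro ⟨h1, h2, h3⟩; exact ⟨h1, by omega, by omega⟩
        · by_cases hv1 : (n:ℤ) ∣ (z (sg n i j) - (i+1))
          · rw [sg_cl1 hn2 hv1]
            have hva : z (sg n i j) ≠ z (i+1) := by
              intro h; rw [h] at hv1; exact hA1 hv1
            constructor
            · rintro ⟨h1, h2, h3⟩; exact ⟨h1, by omega, by omega⟩
            · rintro ⟨h1, h2, h3⟩; exact ⟨h1, by omega, by omega⟩
          · rw [sg_out hn2 hv0 hv1]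
            constructor
            · rintro ⟨h1, h2, h3⟩; exact ⟨h1, by omega, by omega⟩
            · rintro ⟨h1, h2, h3⟩; exact ⟨h1, by omega, by omega⟩
  rw [hset]
  nth_rewrite 2 [← Set.image_preimage_eq (S z (i+1)) (sg_invol hn2 i).surjective]
  exact (Set.ncard_image_of_injective _ (sg_invol hn2 i).injective).symm

lemma sg_preimage_eq (hn2 : 2 ≤ n) (A : Set ℤ) : (sg n i) ⁻¹' A = (sg n i) '' A := by
  ext x
  constructor
  · intro hx; exact ⟨sg n i x, hx, sg_invol hn2 i x⟩
  · rintro ⟨y, hy, hyx⟩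
    have : sg n i x = y := by rw [← hyx, sg_invol hn2 i y]
    rwa [Set.mem_preimage, this]

include hp hinv hvd hna in
lemma case_b_iii (hn : 0 < n) :
    icodeEntry z i = icodeEntry (sgE n hn2 i * z * sgE n hn2 i) (i + 1) + 1 := by
  have ha1 : z (i+1) < z i := hvd.1
  have ha2 : z (i+1) ≤ i - 1 := by have := hvd.2; omega
  have hA1 : ¬ (n:ℤ) ∣ (z (i+1) - (i+1)) := a_not_cl1 hp hinv hvd
  have hni : (2:ℤ) ≤ n := by exact_mod_cast hn2
  rw [icode_eq, icode_eq]
  have hset : S z i = insert (i + 1) ((sg n i) ⁻¹' (S (sgE n hn2 i * z * sgE n hn2 i) (i + 1))) := by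
    ext j
    simp only [S, Set.mem_setOf_eq, Set.mem_insert_iff, Set.mem_preimage,
      Equiv.Perm.mul_apply, sgE_apply, le_min_iff]
    rw [sg_invol hn2 i j, sg_cl1 hn2 (show (n:ℤ) ∣ (i + 1 - (i+1)) by simp),
      show (i:ℤ) + 1 - 1 = i by ring]
    by_cases hj1 : j = i + 1
    · subst hj1
      constructor
      · intro _; exact Or.inl rfl
      · intro _; exact ⟨by omega, by omega, by omega⟩
    · simp only [hj1, false_or]
      rw [← g1_lemma hn2 hj1]
      by_cases hji : j = i
      · constructor <;> (rintro ⟨h1, -⟩; exfalso; omega)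
      · by_cases hsp : z j = i + 1
        · have hjv := hinv j
          rw [hsp] at hjv
          constructor <;> (rintro ⟨h1, -⟩; exfalso; omega)
        · by_cases hbcl0 : (n:ℤ) ∣ (z i - i)
          · have hb3 := b_fact3 hp hinv hbcl0
            rw [hb3, sg_cl0 hn2 (show (n:ℤ) ∣ (i - i) by simp)]
            by_cases hv0 : (n:ℤ) ∣ (z j - i)
            · rw [sg_cl0 hn2 hv0]
              constructor
              · rintro ⟨h1, h2, h3⟩; exact ⟨h1, by omega, by omega⟩
              · rintro ⟨h1, h2, h3⟩; exact ⟨h1, by omega, by omega⟩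
            · by_cases hv1 : (n:ℤ) ∣ (z j - (i+1))
              · rw [sg_cl1 hn2 hv1]
                have hvi : z j ≠ i := by
                  intro h; rw [h] at hv1
                  apply not_dvd_one hn2
                  rwa [show (i:ℤ) - (i+1) = -1 by ring, Int.dvd_neg] at hv1
                constructor
                · rintro ⟨h1, h2, h3⟩; exact ⟨h1, by omega, by omega⟩
                · rintro ⟨h1, h2, h3⟩; exact ⟨h1, by omega, by omega⟩
              · rw [sg_out hn2 hv0 hv1]
                have hvi : z j ≠ i := by
                  intro h; apply hv0; rw [h]; simp
                constructor
                · rintro ⟨h1, h2, h3⟩; exact ⟨h1, by omega, by omega⟩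
                · rintro ⟨h1, h2, h3⟩; exact ⟨h1, by omega, by omega⟩
          · by_cases hbcl1 : (n:ℤ) ∣ (z i - (i+1))
            · have hb2 := b_fact2 hp hinv hbcl1
              have hD : (n:ℤ) ≤ z i - (i+1) := Int.le_of_dvd (by omega) hbcl1
              rw [sg_cl1 hn2 hbcl1]
              by_cases hv0 : (n:ℤ) ∣ (z j - i)
              · rw [sg_cl0 hn2 hv0]
                constructor
                · rintro ⟨h1, h2, h3⟩; exact ⟨h1, by omega, by omega⟩
                · rintro ⟨h1, h2, h3⟩; exact ⟨h1, by omega, by omega⟩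
              · by_cases hv1 : (n:ℤ) ∣ (z j - (i+1))
                · rw [sg_cl1 hn2 hv1]
                  have hvi2 : z j ≠ i + 2 := by
                    intro h; rw [h] at hv1
                    apply not_dvd_one hn2
                    rwa [show (i:ℤ) + 2 - (i+1) = 1 by ring] at hv1
                  constructor
                  · rintro ⟨h1, h2, h3⟩; exact ⟨h1, by omega, by omega⟩
                  · rintro ⟨h1, h2, h3⟩; exact ⟨h1, by omega, by omega⟩
                · rw [sg_out hn2 hv0 hv1]
                  have hvi : z j ≠ i + 1 := hsp
                  constructor
                  · rintro ⟨h1, h2, h3⟩; exact ⟨h1, by omega, by omega⟩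
                  · rintro ⟨h1, h2, h3⟩; exact ⟨h1, by omega, by omega⟩
            · rw [sg_out hn2 hbcl0 hbcl1]
              by_cases hv0 : (n:ℤ) ∣ (z j - i)
              · rw [sg_cl0 hn2 hv0]
                have hvb : z j ≠ z i - 1 := by
                  intro h
                  apply hbcl1
                  have : z i - (i+1) = z j - i := by omega
                  rw [this]; exact hv0
                constructor
                · rintro ⟨h1, h2, h3⟩; exact ⟨h1, by omega, by omega⟩
                · rintro ⟨h1, h2, h3⟩; exact ⟨h1, by omega, by omega⟩
              · by_cases hv1 : (n:ℤ) ∣ (z j - (i+1))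
                · rw [sg_cl1 hn2 hv1]
                  have hvi2 : z j ≠ i + 2 := by
                    intro h; rw [h] at hv1
                    apply not_dvd_one hn2
                    rwa [show (i:ℤ) + 2 - (i+1) = 1 by ring] at hv1
                  have hvb : z j ≠ z i := by
                    intro h; exact hji (z.injective h)
                  constructor
                  · rintro ⟨h1, h2, h3⟩; exact ⟨h1, by omega, by omega⟩
                  · rintro ⟨h1, h2, h3⟩; exact ⟨h1, by omega, by omega⟩
                · rw [sg_out hn2 hv0 hv1]
                  have hvi : z j ≠ i + 1 := hsp
                  constructor
                  · rintro ⟨h1, h2, h3⟩; exact ⟨h1, by omega, by omega⟩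
                  · rintro ⟨h1, h2, h3⟩; exact ⟨h1, by omega, by omega⟩
  have hfin : (S (sgE n hn2 i * z * sgE n hn2 i) (i + 1)).Finite :=
    S_fin hn (per_mul (per_mul (sgE_per hn2 i) hp) (sgE_per hn2 i)) _
  have hfin2 : ((sg n i) ⁻¹' (S (sgE n hn2 i * z * sgE n hn2 i) (i + 1))).Finite := by
    rw [sg_preimage_eq hn2]
    exact hfin.image _
  have hnotmem : (i + 1 : ℤ) ∉ (sg n i) ⁻¹' (S (sgE n hn2 i * z * sgE n hn2 i) (i + 1)) := by
    intro hmem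
    simp only [Set.mem_preimage, S, Set.mem_setOf_eq] at hmem
    rw [sg_cl1 hn2 (show (n:ℤ) ∣ (i + 1 - (i+1)) by simp)] at hmem
    omega
  rw [hset, Set.ncard_insert_of_notMem hnotmem hfin2]
  have : ((sg n i) ⁻¹' (S (sgE n hn2 i * z * sgE n hn2 i) (i + 1))).ncard
      = (S (sgE n hn2 i * z * sgE n hn2 i) (i + 1)).ncard := by
    rw [sg_preimage_eq hn2]
    exact Set.ncard_image_of_injective _ (sg_invol hn2 i).injective
  omega

include hp hinv hvd hna in
lemma case_b_invol : ∀ x, (sgE n hn2 i * z * sgE n hn2 i) ((sgE n hn2 i * z * sgE n hn2 i) x) = x := by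
  intro x
  simp only [Equiv.Perm.mul_apply, sgE_apply]
  rw [sg_invol hn2 i (z (sg n i x)), hinv (sg n i x), sg_invol hn2 i x]

include hp hinv hvd hna in
lemma case_b_ne : sgE n hn2 i * z * sgE n hn2 i ≠ z := by
  intro h
  have hval := Equiv.ext_iff.mp h (i + 1)
  simp only [Equiv.Perm.mul_apply, sgE_apply] at hval
  rw [sg_cl1 hn2 (show (n:ℤ) ∣ (i + 1 - (i+1)) by simp),
    show (i:ℤ) + 1 - 1 = i by ring] at hval
  have ha1 : z (i+1) < z i := hvd.1
  have ha2 : z (i+1) ≤ i - 1 := by have := hvd.2; omega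
  by_cases hbcl0 : (n:ℤ) ∣ (z i - i)
  · have hb3 := b_fact3 hp hinv hbcl0
    rw [hb3, sg_cl0 hn2 (show (n:ℤ) ∣ (i - i) by simp)] at hval
    omega
  · by_cases hbcl1 : (n:ℤ) ∣ (z i - (i+1))
    · have hb2 := b_fact2 hp hinv hbcl1
      have hD : (n:ℤ) ≤ z i - (i+1) := Int.le_of_dvd (by omega) hbcl1
      rw [sg_cl1 hn2 hbcl1] at hval
      omega
    · rw [sg_out hn2 hbcl0 hbcl1] at hval
      omega

end CaseB

section CaseA

variable (hn2 : 2 ≤ n) (hp : Per n z) (hinv : ∀ x, z (z x) = x) (hza : z (i + 1) = i)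

include hinv hza in
lemma hzi_a : z i = i + 1 := by
  have := hinv (i + 1)
  rw [hza] at this
  exact this

include hp hinv hza in
lemma za_apply (x : ℤ) :
    (z * sgE n hn2 i) x = if (n:ℤ) ∣ (x - i) ∨ (n:ℤ) ∣ (x - (i+1)) then x else z x := by
  have hzi := hzi_a hinv hza
  simp only [Equiv.Perm.mul_apply, sgE_apply]
  by_cases h0 : (n:ℤ) ∣ (x - i)
  · rw [sg_cl0 hn2 h0, if_pos (Or.inl h0)]
    have hd : (n:ℤ) ∣ (x + 1 - (i+1)) := by
      have : x + 1 - (i+1) = x - i := by ring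
      rw [this]; exact h0
    have := per_dvd hp hd
    rw [hza] at this
    omega
  · by_cases h1 : (n:ℤ) ∣ (x - (i+1))
    · rw [sg_cl1 hn2 h1, if_pos (Or.inr h1)]
      have hd : (n:ℤ) ∣ (x - 1 - i) := by
        have : x - 1 - i = x - (i+1) := by ring
        rw [this]; exact h1
      have := per_dvd hp hd
      rw [hzi] at this
      omega
    · rw [sg_out hn2 h0 h1, if_neg (by tauto)]

include hp hza in
lemma z_out_of_out {x : ℤ} (h0 : ¬ (n:ℤ) ∣ (x - i)) (h1 : ¬ (n:ℤ) ∣ (x - (i+1)))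
    (hzi : z i = i + 1) :
    ¬ (n:ℤ) ∣ (z x - i) ∧ ¬ (n:ℤ) ∣ (z x - (i+1)) := by
  constructor
  · intro h
    apply h1
    have h2 := per_dvd hp (i := i + 1) (j := i + 1 + (z x - i)) (by
      have : i + 1 + (z x - i) - (i + 1) = z x - i := by ring
      rw [this]; exact h)
    rw [hza] at h2
    have h3 : z (i + 1 + (z x - i)) = z x := by omega
    have h4 : i + 1 + (z x - i) = x := z.injective h3
    have : x - (i+1) = z x - i := by omega
    rw [this]; exact h
  · intro h
    apply h0
    have h2 := per_dvd hp (i := i) (j := i + (z x - (i+1))) (by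
      have : i + (z x - (i+1)) - i = z x - (i+1) := by ring
      rw [this]; exact h)
    rw [hzi] at h2
    have h3 : z (i + (z x - (i+1))) = z x := by omega
    have h4 : i + (z x - (i+1)) = x := z.injective h3
    have : x - i = z x - (i+1) := by omega
    rw [this]; exact h

include hp hinv hza in
lemma case_a_i {k : ℤ} (hk0 : ¬ (n:ℤ) ∣ (k - i)) (hk1 : ¬ (n:ℤ) ∣ (k - (i+1))) :
    icodeEntry (z * sgE n hn2 i) k = icodeEntry z k := by
  have hzi := hzi_a hinv hza
  rw [icode_eq, icode_eq]
  congr 1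
  ext j
  simp only [S, Set.mem_setOf_eq, le_min_iff]
  rw [za_apply hn2 hp hinv hza j, za_apply hn2 hp hinv hza k,
    if_neg (show ¬ ((n:ℤ) ∣ (k - i) ∨ (n:ℤ) ∣ (k - (i+1))) by tauto)]
  by_cases h0 : (n:ℤ) ∣ (j - i)
  · rw [if_pos (Or.inl h0)]
    have hzj : z j = z i + (j - i) := per_dvd hp h0
    rw [hzi] at hzj
    constructor
    · rintro ⟨h1, h2, h3⟩; omega
    · rintro ⟨h1, h2, h3⟩; omega
  · by_cases h1 : (n:ℤ) ∣ (j - (i+1))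
    · rw [if_pos (Or.inr h1)]
      have hzj : z j = z (i+1) + (j - (i+1)) := per_dvd hp h1
      rw [hza] at hzj
      have hkj : k ≠ j - 1 := by
        intro h
        apply hk0
        have : k - i = j - (i+1) := by omega
        rw [this]; exact h1
      constructor
      · rintro ⟨h2, h3, h4⟩; omega
      · rintro ⟨h2, h3, h4⟩; omega
    · rw [if_neg (by tauto)]

include hp hinv hza in
lemma case_a_ii :
    icodeEntry (z * sgE n hn2 i) i = icodeEntry z (i + 1) := by
  have hzi := hzi_a hinv hza
  rw [icode_eq, icode_eq]
  congr 1
  ext j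
  simp only [S, Set.mem_setOf_eq, le_min_iff]
  rw [za_apply hn2 hp hinv hza j, za_apply hn2 hp hinv hza i,
    if_pos (show (n:ℤ) ∣ (i - i) ∨ (n:ℤ) ∣ (i - (i+1)) from Or.inl (by simp)), hza]
  by_cases h0 : (n:ℤ) ∣ (j - i)
  · rw [if_pos (Or.inl h0)]
    have hzj : z j = z i + (j - i) := per_dvd hp h0
    rw [hzi] at hzj
    constructor
    · rintro ⟨h1, h2, h3⟩; omega
    · rintro ⟨h1, h2, h3⟩; omega
  · by_cases h1 : (n:ℤ) ∣ (j - (i+1))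
    · rw [if_pos (Or.inr h1)]
      have hzj : z j = z (i+1) + (j - (i+1)) := per_dvd hp h1
      rw [hza] at hzj
      constructor
      · rintro ⟨h2, h3, h4⟩; omega
      · rintro ⟨h2, h3, h4⟩; omega
    · rw [if_neg (by tauto)]
      have : j ≠ i + 1 := by
        rintro rfl; exact h1 (by simp)
      omega

include hp hinv hza in
lemma case_a_iii (hn : 0 < n) :
    icodeEntry z i = icodeEntry (z * sgE n hn2 i) (i + 1) + 1 := by
  have hzi := hzi_a hinv hza
  rw [icode_eq, icode_eq]
  have hset : S z i = insert (i + 1) (S (z * sgE n hn2 i) (i + 1)) := by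
    ext j
    simp only [S, Set.mem_setOf_eq, le_min_iff, Set.mem_insert_iff]
    rw [za_apply hn2 hp hinv hza j, za_apply hn2 hp hinv hza (i+1),
      if_pos (show (n:ℤ) ∣ (i + 1 - i) ∨ (n:ℤ) ∣ (i + 1 - (i+1)) from Or.inr (by simp)), hzi]
    by_cases hj : j = i + 1
    · subst hj
      rw [if_pos (show (n:ℤ) ∣ (i + 1 - i) ∨ (n:ℤ) ∣ (i + 1 - (i+1)) from Or.inr (by simp)),
        hza]
      constructor
      · intro _; exact Or.inl rfl
      · intro _; omega
    · simp only [hj, false_or]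
      by_cases h0 : (n:ℤ) ∣ (j - i)
      · rw [if_pos (Or.inl h0)]
        have hzj : z j = z i + (j - i) := per_dvd hp h0
        rw [hzi] at hzj
        constructor
        · rintro ⟨h1, h2, h3⟩; omega
        · rintro ⟨h1, h2, h3⟩; omega
      · by_cases h1 : (n:ℤ) ∣ (j - (i+1))
        · rw [if_pos (Or.inr h1)]
          have hzj : z j = z (i+1) + (j - (i+1)) := per_dvd hp h1
          rw [hza] at hzj
          have hd := dvd_dist h1 (by omega)
          have hni : (2:ℤ) ≤ n := by exact_mod_cast hn2
          constructor
          · rintro ⟨h2, h3, h4⟩; omega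
          · rintro ⟨h2, h3, h4⟩; omega
        · rw [if_neg (by tauto)]
          omega
  rw [hset, Set.ncard_insert_of_notMem (by rintro ⟨h, _⟩; omega)
    (S_fin hn (per_mul hp (sgE_per hn2 i)) _)]

include hp hinv hza in
lemma case_a_invol : ∀ x, (z * sgE n hn2 i) ((z * sgE n hn2 i) x) = x := by
  have hzi := hzi_a hinv hza
  intro x
  rw [za_apply hn2 hp hinv hza x]
  by_cases h : (n:ℤ) ∣ (x - i) ∨ (n:ℤ) ∣ (x - (i+1))
  · rw [if_pos h, za_apply hn2 hp hinv hza x, if_pos h]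
  · rw [if_neg h]
    push_neg at h
    obtain ⟨ho0a, ho1a⟩ := z_out_of_out hp hza h.1 h.2 hzi
    rw [za_apply hn2 hp hinv hza (z x),
      if_neg (show ¬ ((n:ℤ) ∣ (z x - i) ∨ (n:ℤ) ∣ (z x - (i+1))) by tauto)]
    exact hinv x

include hp hinv hza in
lemma case_a_comm : sgE n hn2 i * (z * sgE n hn2 i) * sgE n hn2 i = z * sgE n hn2 i := by
  have hzi := hzi_a hinv hza
  apply Equiv.ext
  intro x
  have h1 : (sgE n hn2 i * (z * sgE n hn2 i) * sgE n hn2 i) x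
      = sgE n hn2 i ((z * sgE n hn2 i) (sgE n hn2 i x)) := rfl
  rw [h1, za_apply hn2 hp hinv hza (sgE n hn2 i x), za_apply hn2 hp hinv hza x]
  simp only [sgE_apply]
  by_cases h0 : (n:ℤ) ∣ (x - i)
  · simp only [sg_cl0 hn2 h0, if_pos (Or.inl h0)]
    have hd : (n:ℤ) ∣ (x + 1 - (i+1)) := by
      have : x + 1 - (i+1) = x - i := by ring
      rw [this]; exact h0
    rw [if_pos (Or.inr hd), sg_cl1 hn2 hd]
    omega
  · by_cases h1 : (n:ℤ) ∣ (x - (i+1))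
    · simp only [sg_cl1 hn2 h1, if_pos (Or.inr h1)]
      have hd : (n:ℤ) ∣ (x - 1 - i) := by
        have : x - 1 - i = x - (i+1) := by ring
        rw [this]; exact h1
      rw [if_pos (Or.inl hd), sg_cl0 hn2 hd]
      omega
    · simp only [sg_out hn2 h0 h1,
        if_neg (show ¬ ((n:ℤ) ∣ (x - i) ∨ (n:ℤ) ∣ (x - (i+1))) by tauto)]
      obtain ⟨ho0, ho1⟩ := z_out_of_out hp hza h0 h1 hzi
      exact sg_out hn2 ho0 ho1

end CaseA

section Step

variable (hn2 : 2 ≤ n) {w : Equiv.Perm ℤ} {i : ℤ}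

variable (n) in
noncomputable def step (hn2 : 2 ≤ n) (w : Equiv.Perm ℤ) (i : ℤ) : Equiv.Perm ℤ :=
  if w (i + 1) = i then w * sgE n hn2 i else sgE n hn2 i * w * sgE n hn2 i

variable (hp : Per n w) (hinv : ∀ x, w (w x) = x) (hvd : Vd w i)

include hp in
lemma step_per : Per n (step n hn2 w i) := by
  unfold step
  split_ifs
  · exact per_mul hp (sgE_per hn2 i)
  · exact per_mul (per_mul (sgE_per hn2 i) hp) (sgE_per hn2 i)

include hp hinv hvd in
lemma step_invol : ∀ x, (step n hn2 w i) ((step n hn2 w i) x) = x := by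
  unfold step
  split_ifs with h
  · exact case_a_invol hn2 hp hinv h
  · exact case_b_invol hn2 hp hinv hvd h

include hp hinv hvd in
lemma step_code_out {k : ℤ} (hk0 : ¬ (n:ℤ) ∣ (k - i)) (hk1 : ¬ (n:ℤ) ∣ (k - (i+1))) :
    icodeEntry (step n hn2 w i) k = icodeEntry w k := by
  unfold step
  split_ifs with h
  · exact case_a_i hn2 hp hinv h hk0 hk1
  · exact case_b_i hn2 hp hinv hvd h hk0 hk1

include hp hinv hvd in
lemma step_code_i : icodeEntry (step n hn2 w i) i = icodeEntry w (i + 1) := by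
  unfold step
  split_ifs with h
  · exact case_a_ii hn2 hp hinv h
  · exact case_b_ii hn2 hp hinv hvd h

include hp hinv hvd in
lemma step_code_i1 : icodeEntry w i = icodeEntry (step n hn2 w i) (i + 1) + 1 := by
  unfold step
  split_ifs with h
  · exact case_a_iii hn2 hp hinv h (by omega)
  · exact case_b_iii hn2 hp hinv hvd h (by omega)

lemma conj_conj (u : Equiv.Perm ℤ) :
    sgE n hn2 i * (sgE n hn2 i * u * sgE n hn2 i) * sgE n hn2 i = u := by
  apply Equiv.ext
  intro x
  simp only [Equiv.Perm.mul_apply, sgE_apply]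
  rw [sg_invol hn2 i x, sg_invol hn2 i (u x)]

include hp hinv hvd in
lemma step_recover_comm (h : sgE n hn2 i * step n hn2 w i * sgE n hn2 i = step n hn2 w i) :
    step n hn2 w i * sgE n hn2 i = w := by
  unfold step at *
  split_ifs at * with hc
  · rw [mul_assoc, sgE_sq hn2 i, mul_one]
  · exfalso
    exact case_b_ne hn2 hp hinv hvd hc (h.symm.trans (conj_conj hn2 w))

include hp hinv hvd in
lemma step_recover_conj (h : sgE n hn2 i * step n hn2 w i * sgE n hn2 i ≠ step n hn2 w i) :
    sgE n hn2 i * step n hn2 w i * sgE n hn2 i = w := by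
  unfold step at *
  split_ifs at * with hc
  · exact absurd (case_a_comm hn2 hp hinv hc) h
  · exact conj_conj hn2 w

end Step

end Transform

section Main

lemma icode_one (x : ℤ) : icodeEntry (1 : Equiv.Perm ℤ) x = 0 := by
  rw [icode_eq]
  have h : S (1 : Equiv.Perm ℤ) x = ∅ := by
    ext j
    simp only [S, Set.mem_setOf_eq, Equiv.Perm.one_apply, Set.mem_empty_iff_false, iff_false,
      not_and, le_min_iff]
    intro h1
    omega
  rw [h, Set.ncard_empty]

variable (n) in
def rep (x : ℤ) : ℤ := (x - 1) % n + 1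

lemma rep_dvd (hn : 0 < n) (x : ℤ) : (n:ℤ) ∣ (x - rep n x) := by
  unfold rep
  have h3 : x - ((x - 1) % n + 1) = (x - 1) - (x - 1) % n := by ring
  rw [h3, Int.emod_def]
  exact ⟨(x-1)/n, by ring⟩

lemma rep_mem (hn : 0 < n) (x : ℤ) : rep n x ∈ Finset.Icc (1:ℤ) (n:ℤ) := by
  have hnn : (0:ℤ) < n := by exact_mod_cast hn
  have h1 : 0 ≤ (x-1) % n := Int.emod_nonneg _ (by omega)
  have h2 : (x-1) % n < n := Int.emod_lt_of_pos _ hnn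
  simp only [Finset.mem_Icc, rep]
  omega

lemma rep_unique (hn : 0 < n) {r x : ℤ} (hr : r ∈ Finset.Icc (1:ℤ) (n:ℤ))
    (hd : (n:ℤ) ∣ (r - x)) : r = rep n x := by
  have hd2 : (n:ℤ) ∣ (r - rep n x) := by
    have h : r - rep n x = (r - x) + (x - rep n x) := by ring
    rw [h]; exact Dvd.dvd.add hd (rep_dvd hn x)
  by_contra hne
  have hb := rep_mem hn x
  simp only [Finset.mem_Icc] at hr hb
  rcases dvd_dist hd2 (by omega) with h | h <;> omega

lemma dvd_swap {a b : ℤ} (h : (n:ℤ) ∣ (a - b)) : (n:ℤ) ∣ (b - a) := by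
  have : b - a = -(a - b) := by ring
  rw [this]; exact dvd_neg.mpr h

lemma n_one_case {z : Equiv.Perm ℤ} (hp : Per 1 z) (hinv : ∀ x, z (z x) = x) : z = 1 := by
  have h1 : ∀ x : ℤ, z x = z 0 + x := by
    intro x
    have h := per_add hp x 0
    simpa using h
  have h2 := hinv 0
  rw [h1 (z 0), h1 0] at h2
  have hz0 : z 0 = 0 := by omega
  apply Equiv.ext
  intro x
  rw [h1 x, hz0]
  simp

lemma main_induction (hn2 : 2 ≤ n) :
    ∀ N : ℕ, ∀ y z : Equiv.Perm ℤ, Per n y → Per n z →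
    (∀ x, y (y x) = x) → (∀ x, z (z x) = x) →
    (∀ x : ℤ, icodeEntry y x = icodeEntry z x) →
    (∑ r ∈ Finset.Icc (1:ℤ) (n:ℤ), icodeEntry y r) = N →
    y = z := by
  intro N
  induction N using Nat.strong_induction_on with
  | _ N ih =>
  intro y z hpy hpz hiy hiz hcode hsum
  have hn : 0 < n := by omega
  have hyinv : y⁻¹ = y := by
    have h1 : y * y = 1 := Equiv.ext fun x => by simpa using hiy x
    exact (eq_inv_of_mul_eq_one_left h1).symm
  have hzinv : z⁻¹ = z := by
    have h1 : z * z = 1 := Equiv.ext fun x => by simpa using hiz x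
    exact (eq_inv_of_mul_eq_one_left h1).symm
  by_cases hy1 : y = 1
  · subst hy1
    by_contra hne
    have hne' : z ≠ 1 := fun h => hne h.symm
    obtain ⟨i, hvd⟩ := exists_vd hn hpz hzinv hne'
    have h1 := vd_code_gt hn hpz hvd
    have h2 := hcode i
    rw [icode_one] at h2
    omega
  · obtain ⟨i, hvd⟩ := exists_vd hn hpy hyinv hy1
    have hvdz : Vd z i := by
      by_contra hnv
      have h1 := vd_code_gt hn hpy hvd
      have h2 := not_vd_code_le hn hpz hnv
      have h3 := hcode i
      have h4 := hcode (i+1)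
      omega
    have hpy' : Per n (step n hn2 y i) := step_per hn2 hpy
    have hpz' : Per n (step n hn2 z i) := step_per hn2 hpz
    have hiy' := step_invol hn2 hpy hiy hvd
    have hiz' := step_invol hn2 hpz hiz hvdz
    -- codes of the steps agree everywhere
    have hcode' : ∀ x : ℤ, icodeEntry (step n hn2 y i) x = icodeEntry (step n hn2 z i) x := by
      intro x
      by_cases hx0 : (n:ℤ) ∣ (x - i)
      · rw [icode_dvd hpy' hx0, icode_dvd hpz' hx0, step_code_i hn2 hpy hiy hvd,
          step_code_i hn2 hpz hiz hvdz, hcode (i+1)]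
      · by_cases hx1 : (n:ℤ) ∣ (x - (i+1))
        · rw [icode_dvd hpy' hx1, icode_dvd hpz' hx1]
          have h1 := step_code_i1 hn2 hpy hiy hvd
          have h2 := step_code_i1 hn2 hpz hiz hvdz
          have h3 := hcode i
          omega
        · rw [step_code_out hn2 hpy hiy hvd hx0 hx1, step_code_out hn2 hpz hiz hvdz hx0 hx1,
            hcode x]
    -- the sum of the code of (step y) over the window is N - 1
    have hr1 : rep n i ∈ Finset.Icc (1:ℤ) (n:ℤ) := rep_mem hn i
    have hr2 : rep n (i+1) ∈ Finset.Icc (1:ℤ) (n:ℤ) := rep_mem hn (i+1)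
    have hne12 : rep n i ≠ rep n (i+1) := by
      intro h
      apply not_dvd_one hn2
      have d1 : (n:ℤ) ∣ (i - rep n i) := rep_dvd hn i
      have d2 : (n:ℤ) ∣ ((i+1) - rep n (i+1)) := rep_dvd hn (i+1)
      rw [← h] at d2
      have h3 : (1:ℤ) = ((i+1) - rep n i) - (i - rep n i) := by ring
      rw [h3]
      exact Int.dvd_sub d2 d1
    have hr2' : rep n (i+1) ∈ (Finset.Icc (1:ℤ) (n:ℤ)).erase (rep n i) :=
      Finset.mem_erase.mpr ⟨fun h => hne12 h.symm, hr2⟩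
    have hsplit : ∀ f : ℤ → ℕ, ∑ r ∈ Finset.Icc (1:ℤ) (n:ℤ), f r
        = f (rep n i) + (f (rep n (i+1)) + ∑ r ∈ ((Finset.Icc (1:ℤ) (n:ℤ)).erase (rep n i)).erase (rep n (i+1)), f r) := by
      intro f
      rw [← Finset.add_sum_erase _ f hr1, ← Finset.add_sum_erase _ f hr2']
    have hcongr : ∀ w : Equiv.Perm ℤ, Per n w → (∀ x, w (w x) = x) → Vd w i →
        ∀ r ∈ ((Finset.Icc (1:ℤ) (n:ℤ)).erase (rep n i)).erase (rep n (i+1)),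
        icodeEntry (step n hn2 w i) r = icodeEntry w r := by
      intro w hpw hiw hvw r hr
      obtain ⟨hrne2, hrr⟩ := Finset.mem_erase.mp hr
      obtain ⟨hrne1, hrW⟩ := Finset.mem_erase.mp hrr
      apply step_code_out hn2 hpw hiw hvw
      · intro hd
        exact hrne1 (rep_unique hn hrW hd)
      · intro hd
        exact hrne2 (rep_unique hn hrW hd)
    -- values at the two window representatives
    have hval : ∀ w : Equiv.Perm ℤ, Per n w → (∀ x, w (w x) = x) → Vd w i →
        icodeEntry (step n hn2 w i) (rep n i) = icodeEntry w (i+1) ∧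
        icodeEntry w i = icodeEntry (step n hn2 w i) (rep n (i+1)) + 1 ∧
        icodeEntry w (rep n i) = icodeEntry w i ∧
        icodeEntry w (rep n (i+1)) = icodeEntry w (i+1) := by
      intro w hpw hiw hvw
      have hpw' : Per n (step n hn2 w i) := step_per hn2 hpw
      refine ⟨?_, ?_, ?_, ?_⟩
      · rw [icode_dvd hpw' (dvd_swap (rep_dvd hn i)), step_code_i hn2 hpw hiw hvw]
      · rw [icode_dvd hpw' (dvd_swap (rep_dvd hn (i+1)))]
        exact step_code_i1 hn2 hpw hiw hvw
      · exact icode_dvd hpw (dvd_swap (rep_dvd hn i))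
      · exact icode_dvd hpw (dvd_swap (rep_dvd hn (i+1)))
    obtain ⟨hv1, hv2, hv3, hv4⟩ := hval y hpy hiy hvd
    have hge1 := vd_code_gt hn hpy hvd
    have hsum'lt : (∑ r ∈ Finset.Icc (1:ℤ) (n:ℤ), icodeEntry (step n hn2 y i) r) < N := by
      have e1 : ∑ r ∈ ((Finset.Icc (1:ℤ) (n:ℤ)).erase (rep n i)).erase (rep n (i+1)),
          icodeEntry (step n hn2 y i) r
          = ∑ r ∈ ((Finset.Icc (1:ℤ) (n:ℤ)).erase (rep n i)).erase (rep n (i+1)),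
          icodeEntry y r := Finset.sum_congr rfl (hcongr y hpy hiy hvd)
      rw [hsplit (icodeEntry (step n hn2 y i)), e1]
      rw [hsplit (icodeEntry y)] at hsum
      omega
    have heq : step n hn2 y i = step n hn2 z i :=
      ih _ hsum'lt _ _ hpy' hpz' hiy' hiz' hcode' rfl
    -- recover y and z
    by_cases hcomm : sgE n hn2 i * step n hn2 y i * sgE n hn2 i = step n hn2 y i
    · have h1 := step_recover_comm hn2 hpy hiy hvd hcomm
      have h2 := step_recover_comm hn2 hpz hiz hvdz (by rw [← heq]; exact hcomm)
      rw [← h1, ← h2, heq]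
    · have h1 := step_recover_conj hn2 hpy hiy hvd hcomm
      have h2 := step_recover_conj hn2 hpz hiz hvdz (by rw [← heq]; exact hcomm)
      rw [← h1, ← h2, heq]

end Main

end AuxICode

/-- the involution code is injective on affine involutions. -/
theorem icode_injective (n : ℕ) (hn : 0 < n) :
    ∀ y z : Equiv.Perm ℤ, IsAffine n y → IsAffine n z → y⁻¹ = y → z⁻¹ = z →
      (∀ i : ℤ, 1 ≤ i → i ≤ n → icodeEntry y i = icodeEntry z i) → y = z := by
  intro y z hy hz hyi hzi hcode
  have hpy : AuxICode.Per n y := hy.1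
  have hpz : AuxICode.Per n z := hz.1
  have hiy : ∀ x, y (y x) = x := fun x => by
    nth_rewrite 1 [← hyi]; exact Equiv.symm_apply_apply y x
  have hiz : ∀ x, z (z x) = x := fun x => by
    nth_rewrite 1 [← hzi]; exact Equiv.symm_apply_apply z x
  rcases Nat.lt_or_ge n 2 with h2 | h2
  · have hn1 : n = 1 := by omega
    subst hn1
    rw [AuxICode.n_one_case hpy hiy, AuxICode.n_one_case hpz hiz]
  · have hcode_all : ∀ x : ℤ, icodeEntry y x = icodeEntry z x := by
      intro x
      have hr := AuxICode.rep_mem hn x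
      simp only [Finset.mem_Icc] at hr
      have d : (n:ℤ) ∣ (x - AuxICode.rep n x) := AuxICode.rep_dvd hn x
      rw [AuxICode.icode_dvd hpy d, AuxICode.icode_dvd hpz d]
      exact hcode _ hr.1 hr.2
    exact AuxICode.main_induction h2 _ y z hpy hpz hiy hiz hcode_all rfl
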